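/- Let β ∈ (π/2, π) and N ≥ 2. There exist constants d₁, d₂ > 0 and ε₀ > 0 such that for all ε ∈ (0, ε₀), d₁ |Ω_β \ 𝑇̃Ω_β(ε)|^{(N+2l_β−2)/N} ≤ λ₁[𝑇̃Ω_β(ε)] − λ₁[Ω_β] ≤ d₂ |Ω_β \ 𝑇̃Ω_β(ε)|^{(N+2l_β−2)/N}, assuming (i) domain monotonicity of the first Dirichlet eigenvalue, (ii) the asymptotic expansion λ₁[Ω_β(ε)] = λ₁[Ω_β] + b|Ω_β \ Ω_β(ε)|^{(N+2l_β−2)/N} + o(·) with b > 0, and (iii) the inclusions Ω_β(ε) ⊆ 𝑇̃Ω_β(ε) ⊆ Ω_β(Aε) with A = sin β/√(2(1−cos β)). -/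

import Mathlib

open Real MeasureTheory
open scoped ENNReal

/-- two-sided estimate for the first Dirichlet eigenvalue of the
Lipschitz modification `𝑇̃Ω_β(ε)` of the spherical cone `Ω_β` (of angle
`β ∈ (π/2, π)`): there are `d₁, d₂ > 0` with
`d₁ |Ω_β \ 𝑇̃Ω_β(ε)|^q ≤ λ₁[𝑇̃Ω_β(ε)] - λ₁[Ω_β] ≤ d₂ |Ω_β \ 𝑇̃Ω_β(ε)|^q`,
`q = (N + 2l_β - 2)/N`, for all small `ε > 0`, assuming (i) domain monotonicity of
`λ₁`, (ii) the asymptotic expansion for `λ₁[Ω_β(ε)]` with leading coefficient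
`b > 0`, (iii) the inclusions `Ω_β(ε) ⊆ 𝑇̃Ω_β(ε) ⊆ Ω_β(Aε)`, and the scaling
property of the measure `|Ω_β \ 𝑇̃Ω_β(cε)| = c^N |Ω_β \ 𝑇̃Ω_β(ε)|`. -/
theorem two_sided_eigenvalue_estimate (N : ℕ) (hN : 2 ≤ N)
    (β : ℝ) (hβ : π / 2 < β) (hβ' : β < π)
    (lβ : ℝ) (hlβ : 0 < lβ) (hlβ' : lβ < 1)
    (Ω : ℝ → Set (EuclideanSpace ℝ (Fin N)))
    (hΩ : ∀ δ, Ω δ = {x | δ < ‖x‖ ∧ ‖x‖ < 1 ∧ ‖x‖ * Real.cos β < x ⟨0, by omega⟩})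
    (T : ℝ → Set (EuclideanSpace ℝ (Fin N)))
    (hT : ∀ ε, T ε = {x |
      (if Real.sqrt (‖x‖ ^ 2 - (x ⟨0, by omega⟩) ^ 2) ≤ ε * Real.sin β
        then ε - Real.sqrt (‖x‖ ^ 2 - (x ⟨0, by omega⟩) ^ 2) * Real.tan (β / 2)
        else Real.sqrt (‖x‖ ^ 2 - (x ⟨0, by omega⟩) ^ 2) * (Real.cos β / Real.sin β))
        < x ⟨0, by omega⟩ ∧ ‖x‖ < 1})
    (lam1 : Set (EuclideanSpace ℝ (Fin N)) → ℝ)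
    (hmono : ∀ A B : Set (EuclideanSpace ℝ (Fin N)), A ⊆ B → lam1 B ≤ lam1 A)
    (q : ℝ) (hq : q = ((N : ℝ) + 2 * lβ - 2) / N)
    (b : ℝ) (hb : 0 < b)
    (hexp : ∀ η > (0 : ℝ), ∃ δ > (0 : ℝ), ∀ ε ∈ Set.Ioo (0 : ℝ) δ,
      |lam1 (Ω ε) - lam1 (Ω 0) - b * (volume (Ω 0 \ Ω ε)).toReal ^ q|
        ≤ η * (volume (Ω 0 \ Ω ε)).toReal ^ q)
    (A : ℝ) (hA : A = Real.sin β / Real.sqrt (2 * (1 - Real.cos β)))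
    (hincl : ∀ ε ∈ Set.Ico (0 : ℝ) 1, Ω ε ⊆ T ε ∧ T ε ⊆ Ω (A * ε))
    (hscale : ∀ c ∈ Set.Ioc (0 : ℝ) 1, ∀ ε ∈ Set.Ioo (0 : ℝ) 1,
      volume (Ω 0 \ T (c * ε)) = ENNReal.ofReal (c ^ N) * volume (Ω 0 \ T ε)) :
    ∃ d₁ > (0 : ℝ), ∃ d₂ > (0 : ℝ), ∃ ε₀ > (0 : ℝ), ∀ ε ∈ Set.Ioo (0 : ℝ) ε₀,
      d₁ * (volume (Ω 0 \ T ε)).toReal ^ q ≤ lam1 (T ε) - lam1 (Ω 0) ∧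
      lam1 (T ε) - lam1 (Ω 0) ≤ d₂ * (volume (Ω 0 \ T ε)).toReal ^ q := by
  
  -- basic positivity facts
  have hπ := Real.pi_pos
  have hβ0 : 0 < β := lt_trans (by linarith) hβ
  have hsin : 0 < Real.sin β := Real.sin_pos_of_pos_of_lt_pi hβ0 hβ'
  have hcos : Real.cos β < 0 :=
    Real.cos_neg_of_pi_div_two_lt_of_lt hβ (by linarith)
  have hA0 : 0 < A := by
    rw [hA]
    exact div_pos hsin (Real.sqrt_pos.mpr (by linarith))
  have hA1 : A < 1 := by
    rw [hA]
    rw [div_lt_one (Real.sqrt_pos.mpr (by linarith))]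
    have h1 : (1 : ℝ) < 2 * (1 - Real.cos β) := by linarith
    have := Real.sqrt_lt_sqrt (by norm_num) h1
    rw [Real.sqrt_one] at this
    exact lt_of_le_of_lt (Real.sin_le_one β) this
  have hN0 : (0 : ℝ) < N := by positivity
  have hN2 : (2 : ℝ) ≤ N := by exact_mod_cast hN
  have hq0 : 0 < q := by
    rw [hq]; exact div_pos (by linarith) hN0
  -- finiteness of volume of Ω 0
  have hΩfin : volume (Ω 0) < ⊤ := by
    refine lt_of_le_of_lt (measure_mono ?_)
      (measure_ball_lt_top (x := (0 : EuclideanSpace ℝ (Fin N))) (r := 1))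
    rw [hΩ]
    intro x hx
    simpa [mem_ball_zero_iff] using hx.2.1
  have hfin : ∀ S : Set (EuclideanSpace ℝ (Fin N)), volume (Ω 0 \ S) ≠ ⊤ :=
    fun S => (lt_of_le_of_lt (measure_mono Set.diff_subset) hΩfin).ne
  -- expansion with η = b/2
  obtain ⟨δ, hδ, hE⟩ := hexp (b / 2) (by positivity)
  -- constants
  have hANpos : (0 : ℝ) < A ^ N := pow_pos hA0 N
  set K : ℝ := (A ^ N) ^ q with hK
  have hKpos : 0 < K := Real.rpow_pos_of_pos hANpos q
  refine ⟨b / 2 * K, by positivity, 3 * b / 2 / K, by positivity, min δ A,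
    lt_min hδ hA0, ?_⟩
  rintro ε ⟨hε0, hεlt⟩
  have hεδ : ε < δ := lt_of_lt_of_le hεlt (min_le_left _ _)
  have hεA : ε < A := lt_of_lt_of_le hεlt (min_le_right _ _)
  have hε1 : ε < 1 := hεA.trans hA1
  -- inclusions
  obtain ⟨hi1, hi2⟩ := hincl ε ⟨hε0.le, hε1⟩
  obtain ⟨hj1, hj2⟩ := hincl (A * ε) ⟨by positivity, by nlinarith⟩
  have hεA1 : ε / A < 1 := (div_lt_one hA0).mpr hεA
  obtain ⟨hk1, hk2⟩ := hincl (ε / A) ⟨by positivity, hεA1⟩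
  have hmulk : A * (ε / A) = ε := by field_simp
  rw [hmulk] at hk2
  -- scaling identities
  have hs1 := hscale A ⟨hA0, hA1.le⟩ ε ⟨hε0, hε1⟩
  have hs2 := hscale A ⟨hA0, hA1.le⟩ (ε / A) ⟨by positivity, hεA1⟩
  rw [hmulk] at hs2
  -- abbreviations for volumes (toReal)
  set M : ℝ := (volume (Ω 0 \ T ε)).toReal with hM
  have hM0 : 0 ≤ M := ENNReal.toReal_nonneg
  have hmA : (volume (Ω 0 \ T (A * ε))).toReal = A ^ N * M := by
    rw [hs1, ENNReal.toReal_mul, ENNReal.toReal_ofReal hANpos.le]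
  have hmdiv : (volume (Ω 0 \ T (ε / A))).toReal = M / A ^ N := by
    have := congrArg ENNReal.toReal hs2
    rw [ENNReal.toReal_mul, ENNReal.toReal_ofReal hANpos.le] at this
    rw [← hM] at this
    field_simp [this]
    linarith [this]
  -- volume comparisons
  have hv_le : (volume (Ω 0 \ Ω ε)).toReal ≤ M / A ^ N := by
    rw [← hmdiv]
    exact ENNReal.toReal_mono (hfin _)
      (measure_mono (Set.diff_subset_diff_right hk2))
  have hvA_ge : A ^ N * M ≤ (volume (Ω 0 \ Ω (A * ε))).toReal := by
    rw [← hmA]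
    exact ENNReal.toReal_mono (hfin _)
      (measure_mono (Set.diff_subset_diff_right hj1))
  -- eigenvalue expansion bounds
  have hE1 := hE ε ⟨hε0, hεδ⟩
  have hE2 := hE (A * ε) ⟨by positivity, by nlinarith⟩
  rw [abs_le] at hE1 hE2
  -- monotonicity of λ₁
  have hm1 : lam1 (T ε) ≤ lam1 (Ω ε) := hmono _ _ hi1
  have hm2 : lam1 (Ω (A * ε)) ≤ lam1 (T ε) := hmono _ _ hi2
  constructor
  · -- lower bound
    have hpow : (A ^ N * M) ^ q ≤ (volume (Ω 0 \ Ω (A * ε))).toReal ^ q :=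
      Real.rpow_le_rpow (by positivity) hvA_ge hq0.le
    rw [Real.mul_rpow hANpos.le hM0] at hpow
    have hlow : b / 2 * (volume (Ω 0 \ Ω (A * ε))).toReal ^ q
        ≤ lam1 (Ω (A * ε)) - lam1 (Ω 0) := by linarith [hE2.1]
    calc b / 2 * K * M ^ q = b / 2 * ((A ^ N) ^ q * M ^ q) := by ring
      _ ≤ b / 2 * (volume (Ω 0 \ Ω (A * ε))).toReal ^ q := by
          have := mul_le_mul_of_nonneg_left hpow (by positivity : (0:ℝ) ≤ b / 2)
          linarith
      _ ≤ lam1 (Ω (A * ε)) - lam1 (Ω 0) := hlow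
      _ ≤ lam1 (T ε) - lam1 (Ω 0) := by linarith
  · -- upper bound
    have hpow : (volume (Ω 0 \ Ω ε)).toReal ^ q ≤ (M / A ^ N) ^ q :=
      Real.rpow_le_rpow ENNReal.toReal_nonneg hv_le hq0.le
    rw [Real.div_rpow hM0 hANpos.le] at hpow
    have hup : lam1 (Ω ε) - lam1 (Ω 0)
        ≤ 3 * b / 2 * (volume (Ω 0 \ Ω ε)).toReal ^ q := by linarith [hE1.2]
    calc lam1 (T ε) - lam1 (Ω 0) ≤ lam1 (Ω ε) - lam1 (Ω 0) := by linarith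
      _ ≤ 3 * b / 2 * (volume (Ω 0 \ Ω ε)).toReal ^ q := hup
      _ ≤ 3 * b / 2 * (M ^ q / (A ^ N) ^ q) := by
          have := mul_le_mul_of_nonneg_left hpow (by positivity : (0:ℝ) ≤ 3 * b / 2)
          linarith
      _ = 3 * b / 2 / K * M ^ q := by
          rw [hK]; field_simp
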